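/- For all integers n ≥ 2 and k ≥ 2, the graph W_{n,k} is vertex-transitive: for any two vertices u and u' of W_{n,k} there is a graph automorphism of W_{n,k} mapping u to u'. -/

import Mathlib

open Polynomial

/-- Vertex set of `W n k`: `Sum.inl (i, j)` is the vertex `v_{i,j}` and
`Sum.inr (i, j)` is the vertex `w_{i,j}`, for `i ∈ ℤ/nℤ` and `j ∈ {1, …, k}`. -/
abbrev WVert (n k : ℕ) : Type := (ZMod n × Fin k) ⊕ (ZMod n × Fin k)

/-- Adjacency of `W n k`: `v_{i,j} ~ w_{i',l}` iff `i' = i`, or `i = i' + 1` and `j = l`. -/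
def WAdj (n k : ℕ) : WVert n k → WVert n k → Prop
  | Sum.inl p, Sum.inr q => q.1 = p.1 ∨ (p.1 = q.1 + 1 ∧ p.2 = q.2)
  | Sum.inr q, Sum.inl p => q.1 = p.1 ∨ (p.1 = q.1 + 1 ∧ p.2 = q.2)
  | Sum.inl _, Sum.inl _ => False
  | Sum.inr _, Sum.inr _ => False

/-- The graph `W_{n,k}`: vertices `v_{i,j}` and `w_{i,j}` (`i ∈ ℤ/nℤ`, `1 ≤ j ≤ k`),
with edges `v_{i,j} w_{i,l}` for all `i, j, l`, and `w_{i,j} v_{i+1,j}` for all `i, j`. -/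
def W (n k : ℕ) : SimpleGraph (WVert n k) where
  Adj := WAdj n k
  symm := by
    constructor
    rintro (p | p) (q | q) h
    · exact h.elim
    · exact h
    · exact h
    · exact h.elim
  loopless := by constructor; rintro (p | p) h <;> exact h

instance (n k : ℕ) : DecidableRel (WAdj n k) := fun a b =>
  match a, b with
  | Sum.inl p, Sum.inr q =>
      inferInstanceAs (Decidable (q.1 = p.1 ∨ (p.1 = q.1 + 1 ∧ p.2 = q.2)))
  | Sum.inr q, Sum.inl p =>
      inferInstanceAs (Decidable (q.1 = p.1 ∨ (p.1 = q.1 + 1 ∧ p.2 = q.2)))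
  | Sum.inl _, Sum.inl _ => inferInstanceAs (Decidable False)
  | Sum.inr _, Sum.inr _ => inferInstanceAs (Decidable False)

instance (n k : ℕ) : DecidableRel (W n k).Adj :=
  inferInstanceAs (DecidableRel (WAdj n k))

/-- Rotation automorphism: add `a` to the ring index everywhere. -/
def shiftAut (n k : ℕ) (a : ZMod n) : W n k ≃g W n k where
  toEquiv := Equiv.sumCongr
    (Equiv.prodCongr (Equiv.addRight a) (Equiv.refl _))
    (Equiv.prodCongr (Equiv.addRight a) (Equiv.refl _))
  map_rel_iff' := by
    rintro (⟨i, j⟩ | ⟨i, j⟩) (⟨i', j'⟩ | ⟨i', j'⟩) <;>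
      simp only [Equiv.sumCongr_apply, Sum.map_inl, Sum.map_inr, Equiv.prodCongr_apply,
        Prod.map, Equiv.coe_addRight, Equiv.refl_apply, W, WAdj] <;>
      constructor <;> rintro (h | ⟨h1, h2⟩)
    · exact Or.inl (by linear_combination h)
    · exact Or.inr ⟨by linear_combination h1, h2⟩
    · exact Or.inl (by linear_combination h)
    · exact Or.inr ⟨by linear_combination h1, h2⟩
    · exact Or.inl (by linear_combination h)
    · exact Or.inr ⟨by linear_combination h1, h2⟩
    · exact Or.inl (by linear_combination h)
    · exact Or.inr ⟨by linear_combination h1, h2⟩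

/-- Column-permutation automorphism: apply `σ` to the second index everywhere. -/
def permAut (n k : ℕ) (σ : Equiv.Perm (Fin k)) : W n k ≃g W n k where
  toEquiv := Equiv.sumCongr
    (Equiv.prodCongr (Equiv.refl _) σ)
    (Equiv.prodCongr (Equiv.refl _) σ)
  map_rel_iff' := by
    rintro (⟨i, j⟩ | ⟨i, j⟩) (⟨i', j'⟩ | ⟨i', j'⟩) <;>
      simp [W, WAdj]

/-- Swap-reflection automorphism: `v_{i,j} ↦ w_{-i,j}`, `w_{i,j} ↦ v_{-i,j}`. -/
def swapAut (n k : ℕ) : W n k ≃g W n k where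
  toEquiv :=
  { toFun := fun x => match x with
      | Sum.inl (i, j) => Sum.inr (-i, j)
      | Sum.inr (i, j) => Sum.inl (-i, j)
    invFun := fun x => match x with
      | Sum.inl (i, j) => Sum.inr (-i, j)
      | Sum.inr (i, j) => Sum.inl (-i, j)
    left_inv := by rintro (⟨i, j⟩ | ⟨i, j⟩) <;> simp
    right_inv := by rintro (⟨i, j⟩ | ⟨i, j⟩) <;> simp }
  map_rel_iff' := by
    rintro (⟨i, j⟩ | ⟨i, j⟩) (⟨i', j'⟩ | ⟨i', j'⟩) <;>
      simp only [Equiv.coe_fn_mk, W, WAdj] <;>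
      constructor <;> rintro (h | ⟨h1, h2⟩)
    · exact Or.inl (by linear_combination h)
    · exact Or.inr ⟨by linear_combination h1, h2.symm⟩
    · exact Or.inl (by linear_combination h)
    · exact Or.inr ⟨by linear_combination h1, h2.symm⟩
    · exact Or.inl (by linear_combination h)
    · exact Or.inr ⟨by linear_combination h1, h2.symm⟩
    · exact Or.inl (by linear_combination h)
    · exact Or.inr ⟨by linear_combination h1, h2.symm⟩

/-- There is an automorphism sending the base vertex `v_{0,0}` to any given vertex. -/
lemma exists_aut_base (n k : ℕ) [NeZero n] (hk : 2 ≤ k) (u : WVert n k) :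
    ∃ φ : W n k ≃g W n k, φ (Sum.inl (0, ⟨0, by omega⟩)) = u := by
  obtain (⟨i, j⟩ | ⟨i, j⟩) := u
  · refine ⟨(permAut n k (Equiv.swap ⟨0, by omega⟩ j)).trans (shiftAut n k i), ?_⟩
    simp [shiftAut, permAut]
  · refine ⟨((permAut n k (Equiv.swap ⟨0, by omega⟩ j)).trans (shiftAut n k (-i))).trans
      (swapAut n k), ?_⟩
    simp [shiftAut, permAut, swapAut]

/-- `W_{n,k}` is vertex-transitive: any vertex can be mapped to any other vertex by
a graph automorphism. -/
theorem W_vertexTransitive (n k : ℕ) [NeZero n] (hn : 2 ≤ n) (hk : 2 ≤ k)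
    (u u' : WVert n k) :
    ∃ φ : W n k ≃g W n k, φ u = u' := by
  obtain ⟨φ, hφ⟩ := exists_aut_base n k hk u
  obtain ⟨ψ, hψ⟩ := exists_aut_base n k hk u'
  exact ⟨φ.symm.trans ψ, by rw [RelIso.trans_apply, ← hφ, φ.symm_apply_apply, hψ]⟩
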